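/- Let Q be symmetric with λ_Q < 0. Then the minimum of h(y) = yᵀQy + 2gᵀy over the unit ball {y : ‖y‖ ≤ 1} equals the minimum of the convex function f(y) = yᵀ(Q − λ_Q I)y + 2gᵀy + λ_Q over the same ball. -/

import Mathlib

open Matrix

lemma TRS_dot_eq_inner {n : ℕ} (x y : EuclideanSpace ℝ (Fin n)) :
    (x : Fin n → ℝ) ⬝ᵥ (y : Fin n → ℝ) = (inner ℝ x y : ℝ) := by
  simp [dotProduct, PiLp.inner_apply, RCLike.inner_apply, mul_comm]

lemma TRS_dot_self {n : ℕ} (x : EuclideanSpace ℝ (Fin n)) :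
    (x : Fin n → ℝ) ⬝ᵥ (x : Fin n → ℝ) = ‖x‖ ^ 2 := by
  rw [TRS_dot_eq_inner, real_inner_self_eq_norm_sq]

lemma TRS_dot_expand_left {n : ℕ} (x w : EuclideanSpace ℝ (Fin n)) (t : ℝ)
    (q : Fin n → ℝ) :
    ((x + t • w : EuclideanSpace ℝ (Fin n)) : Fin n → ℝ) ⬝ᵥ q
      = (x : Fin n → ℝ) ⬝ᵥ q + t * ((w : Fin n → ℝ) ⬝ᵥ q) := by
  simp [dotProduct, PiLp.add_apply, PiLp.smul_apply, add_mul, mul_assoc,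
    Finset.sum_add_distrib, Finset.mul_sum]

lemma TRS_dot_expand_right {n : ℕ} (x w : EuclideanSpace ℝ (Fin n)) (t : ℝ)
    (q : Fin n → ℝ) :
    q ⬝ᵥ ((x + t • w : EuclideanSpace ℝ (Fin n)) : Fin n → ℝ)
      = q ⬝ᵥ (x : Fin n → ℝ) + t * (q ⬝ᵥ (w : Fin n → ℝ)) := by
  simp [dotProduct, PiLp.add_apply, PiLp.smul_apply, mul_add, mul_left_comm,
    Finset.sum_add_distrib, Finset.mul_sum]

lemma TRS_mulVec_add_smul {n : ℕ} (A : Matrix (Fin n) (Fin n) ℝ)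
    (x w : EuclideanSpace ℝ (Fin n)) (t : ℝ) :
    A.mulVec ((x + t • w : EuclideanSpace ℝ (Fin n)) : Fin n → ℝ)
      = A.mulVec x + t • A.mulVec w := by
  funext i
  simp [Matrix.mulVec, dotProduct, PiLp.add_apply, PiLp.smul_apply, mul_add,
    mul_left_comm, Finset.sum_add_distrib, Finset.mul_sum]

theorem classical_TRS_convex_reformulation {n : ℕ} (Q : Matrix (Fin n) (Fin n) ℝ)
    (g : EuclideanSpace ℝ (Fin n)) (lamQ : ℝ)
    (hQ : Q.IsSymm)
    (hlb : ∀ y : EuclideanSpace ℝ (Fin n), lamQ * ‖y‖ ^ 2 ≤ y ⬝ᵥ Q.mulVec y)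
    (hev : ∃ v : EuclideanSpace ℝ (Fin n), v ≠ 0 ∧ Q.mulVec v = lamQ • (v : Fin n → ℝ))
    (hneg : lamQ < 0) :
    sInf ((fun y : EuclideanSpace ℝ (Fin n) => y ⬝ᵥ Q.mulVec y + 2 * (g ⬝ᵥ y)) ''
        Metric.closedBall 0 1) =
      sInf ((fun y : EuclideanSpace ℝ (Fin n) =>
          y ⬝ᵥ (Q - lamQ • (1 : Matrix (Fin n) (Fin n) ℝ)).mulVec y + 2 * (g ⬝ᵥ y) + lamQ) ''
        Metric.closedBall 0 1) := by
  obtain ⟨v, hv0, hvQ⟩ := hev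
  set h : EuclideanSpace ℝ (Fin n) → ℝ :=
    fun y => y ⬝ᵥ Q.mulVec y + 2 * (g ⬝ᵥ y) with hh
  set f : EuclideanSpace ℝ (Fin n) → ℝ :=
    fun y => y ⬝ᵥ (Q - lamQ • (1 : Matrix (Fin n) (Fin n) ℝ)).mulVec y + 2 * (g ⬝ᵥ y) + lamQ
    with hf
  -- expansion of f
  have hfE : ∀ y : EuclideanSpace ℝ (Fin n),
      f y = y ⬝ᵥ Q.mulVec y - lamQ * ‖y‖ ^ 2 + 2 * (g ⬝ᵥ y) + lamQ := by
    intro y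
    have : (y : Fin n → ℝ) ⬝ᵥ (Q - lamQ • (1 : Matrix (Fin n) (Fin n) ℝ)).mulVec y
        = y ⬝ᵥ Q.mulVec y - lamQ * ‖y‖ ^ 2 := by
      rw [Matrix.sub_mulVec, dotProduct_sub, Matrix.smul_mulVec,
        Matrix.one_mulVec, dotProduct_smul, TRS_dot_self, smul_eq_mul]
    simp only [hf, this]
  have hgb : ∀ y : EuclideanSpace ℝ (Fin n), y ∈ Metric.closedBall 0 1 →
      -‖g‖ ≤ (g : Fin n → ℝ) ⬝ᵥ y := by
    intro y hy
    rw [Metric.mem_closedBall, dist_zero_right] at hy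
    rw [TRS_dot_eq_inner]
    have h1 : |(inner ℝ g y : ℝ)| ≤ ‖g‖ * ‖y‖ := abs_real_inner_le_norm g y
    have h2 : ‖g‖ * ‖y‖ ≤ ‖g‖ * 1 := mul_le_mul_of_nonneg_left hy (norm_nonneg g)
    nlinarith [neg_abs_le (inner ℝ g y : ℝ)]
  have hsq1 : ∀ y : EuclideanSpace ℝ (Fin n), ‖y‖ ≤ 1 → ‖y‖ ^ 2 ≤ 1 := by
    intro y hy
    nlinarith [norm_nonneg y]
  have hne1 : (h '' Metric.closedBall 0 1).Nonempty := ⟨h 0, 0, by simp, rfl⟩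
  have hne2 : (f '' Metric.closedBall 0 1).Nonempty := ⟨f 0, 0, by simp, rfl⟩
  have hbdd1 : BddBelow (h '' Metric.closedBall 0 1) := by
    refine ⟨lamQ - 2 * ‖g‖, ?_⟩
    rintro b ⟨y, hy, rfl⟩
    have hyn : ‖y‖ ≤ 1 := by rw [Metric.mem_closedBall, dist_zero_right] at hy; exact hy
    have h1 := hlb y
    have h2 := hgb y hy
    have h3 : lamQ * 1 ≤ lamQ * ‖y‖ ^ 2 :=
      mul_le_mul_of_nonpos_left (hsq1 y hyn) hneg.le
    simp only [hh]
    nlinarith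
  have hbdd2 : BddBelow (f '' Metric.closedBall 0 1) := by
    refine ⟨lamQ - 2 * ‖g‖, ?_⟩
    rintro b ⟨y, hy, rfl⟩
    have h1 := hlb y
    have h2 := hgb y hy
    show lamQ - 2 * ‖g‖ ≤ f y
    rw [hfE]
    nlinarith
  apply le_antisymm
  · -- sInf h ≤ sInf f : for each y, construct z on sphere with h z ≤ f y
    apply le_csInf hne2
    rintro b ⟨y, hy, rfl⟩
    have hyn : ‖y‖ ≤ 1 := by rw [Metric.mem_closedBall, dist_zero_right] at hy; exact hy
    set a : ℝ := (v : Fin n → ℝ) ⬝ᵥ v with haa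
    set bb : ℝ := (y : Fin n → ℝ) ⬝ᵥ v with hbb
    set s : ℝ := (g : Fin n → ℝ) ⬝ᵥ v with hss
    set c : ℝ := ‖y‖ ^ 2 - 1 with hcc
    have ha : 0 < a := by
      rw [haa, TRS_dot_self]; exact pow_pos (norm_pos_iff.mpr hv0) 2
    have hc : c ≤ 0 := by
      rw [hcc]; linarith [hsq1 y hyn]
    set D : ℝ := bb ^ 2 - a * c with hDD
    have hD : 0 ≤ D := by nlinarith [sq_nonneg bb, mul_nonneg ha.le (neg_nonneg.mpr hc)]
    set r : ℝ := Real.sqrt D with hrr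
    have hr2 : r ^ 2 = D := Real.sq_sqrt hD
    have hrb : |bb| ≤ r := by
      rw [hrr, ← Real.sqrt_sq_eq_abs]
      exact Real.sqrt_le_sqrt (by nlinarith [mul_nonneg ha.le (neg_nonneg.mpr hc)])
    set t : ℝ := if 0 ≤ s then (-bb - r) / a else (-bb + r) / a with htt
    have hts : t * s ≤ 0 := by
      rcases le_or_gt 0 s with hs | hs
      · have ht : t ≤ 0 := by
          rw [htt, if_pos hs]
          apply div_nonpos_of_nonpos_of_nonneg _ ha.le
          have := neg_abs_le bb
          linarith
        exact mul_nonpos_of_nonpos_of_nonneg ht hs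
      · have ht : 0 ≤ t := by
          rw [htt, if_neg (not_le.mpr hs)]
          apply div_nonneg _ ha.le
          have := le_abs_self bb
          linarith
        exact mul_nonpos_of_nonneg_of_nonpos ht hs.le
    have hroot : a * t ^ 2 + 2 * bb * t + c = 0 := by
      have hane : a ≠ 0 := ha.ne'
      have hr2' : r ^ 2 = bb ^ 2 - a * (‖y‖ ^ 2 - 1) := by rw [hr2, hDD, hcc]
      rw [htt]
      split_ifs with hs
      · field_simp
        linear_combination hr2'
      · field_simp
        linear_combination hr2'
    set z : EuclideanSpace ℝ (Fin n) := y + t • v with hzz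
    -- eigen dot products
    have hQyv : (y : Fin n → ℝ) ⬝ᵥ Q.mulVec v = lamQ * bb := by
      rw [hvQ, dotProduct_smul, smul_eq_mul, hbb]
    have hQvy : (v : Fin n → ℝ) ⬝ᵥ Q.mulVec y = lamQ * bb := by
      rw [dotProduct_mulVec, ← Matrix.mulVec_transpose, hQ, hvQ,
        smul_dotProduct, smul_eq_mul, dotProduct_comm, hbb]
    have hQvv : (v : Fin n → ℝ) ⬝ᵥ Q.mulVec v = lamQ * a := by
      rw [hvQ, dotProduct_smul, smul_eq_mul, haa]
    have hvy : (v : Fin n → ℝ) ⬝ᵥ y = bb := by rw [dotProduct_comm, hbb]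
    -- norm of z
    have hzn2 : ‖z‖ ^ 2 = ‖y‖ ^ 2 + (2 * bb * t + a * t ^ 2) := by
      rw [← TRS_dot_self z, hzz]
      simp only [TRS_dot_expand_left, TRS_dot_expand_right, hvy, ← hbb, ← haa]
      rw [TRS_dot_self y]
      ring
    have hzn : ‖z‖ ≤ 1 := by
      have h1 : ‖z‖ ^ 2 = 1 := by rw [hzn2]; rw [hcc] at hroot; linarith
      nlinarith [norm_nonneg z]
    have hzball : z ∈ Metric.closedBall (0 : EuclideanSpace ℝ (Fin n)) 1 := by
      rw [Metric.mem_closedBall, dist_zero_right]; exact hzn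
    -- value of h at z
    have hhz : h z = (y : Fin n → ℝ) ⬝ᵥ Q.mulVec y + lamQ * (2 * bb * t + a * t ^ 2)
        + 2 * ((g : Fin n → ℝ) ⬝ᵥ y + t * s) := by
      simp only [hh, hzz]
      rw [TRS_mulVec_add_smul]
      simp only [dotProduct_add, dotProduct_smul, smul_eq_mul,
        TRS_dot_expand_left, TRS_dot_expand_right, hQyv, hQvy, hQvv, ← hss, ← hbb]
      ring
    have he : 2 * bb * t + a * t ^ 2 = 1 - ‖y‖ ^ 2 := by
      rw [hcc] at hroot; linarith
    have he2 : lamQ * (2 * bb * t + a * t ^ 2) = lamQ - lamQ * ‖y‖ ^ 2 := by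
      rw [he]; ring
    have hkey : h z ≤ f y := by
      rw [hhz, hfE, he2]
      linarith
    exact le_trans (csInf_le hbdd1 ⟨z, hzball, rfl⟩) hkey
  · apply le_csInf hne1
    rintro b ⟨y, hy, rfl⟩
    have hyn : ‖y‖ ≤ 1 := by rw [Metric.mem_closedBall, dist_zero_right] at hy; exact hy
    have hfh : f y ≤ h y := by
      rw [hfE]
      have h3 : lamQ * 1 ≤ lamQ * ‖y‖ ^ 2 :=
        mul_le_mul_of_nonpos_left (hsq1 y hyn) hneg.le
      simp only [hh]
      nlinarith
    exact le_trans (csInf_le hbdd2 ⟨y, hy, rfl⟩) hfh
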